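/- Let Λ be a countable index set and {y_λ}_{λ∈Λ} points in ℝⁿ satisfying: (a) for every compact K ⊆ ℝⁿ there is C_K > 0 with sup_{x∈ℝⁿ} |{λ : x ∈ y_λ + K}| ≤ C_K, and (b) ℝⁿ = ∪_λ (y_λ + U) for some bounded open neighbourhood U of 0. Let A: [0,∞) → [0,∞) be a nondecreasing function such that e^{−A(h|x|/2)} is integrable on ℝⁿ for every h > 0 and A(h|x|) ≤ A(h|x'|) + A(2h|x−x'|) type subadditivity holds via e^{A(ρ+λ)} ≤ 2 e^{A(2ρ)} e^{A(2λ)}. Then for every h > 0 and ε > 0 there exists R > 0 such that sup_{μ∈Λ} Σ_{λ: |y_λ−y_μ| > R} e^{−A(h|y_λ−y_μ|)} ≤ ε. -/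

import Mathlib

open MeasureTheory Filter Topology

/-- For a family of points with bounded overlap and the covering property, and an
associated-type function `A`, the tails `∑_{|y_λ−y_μ|>R} e^{−A(h|y_λ−y_μ|)}` can be made
uniformly (in `μ`) smaller than any `ε > 0` by choosing `R` large. -/
theorem stmt_1 (n : ℕ) (Λ : Type*) [Countable Λ]
    (y : Λ → EuclideanSpace ℝ (Fin n)) (A : ℝ → ℝ)
    (hA_nonneg : ∀ a : ℝ, 0 ≤ a → 0 ≤ A a)
    (hA_mono : ∀ a b : ℝ, 0 ≤ a → a ≤ b → A a ≤ A b)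
    (hA_sub : ∀ ρ lam : ℝ, 0 ≤ ρ → 0 ≤ lam →
      Real.exp (A (ρ + lam)) ≤ 2 * Real.exp (A (2 * ρ)) * Real.exp (A (2 * lam)))
    (hA_int : ∀ h : ℝ, 0 < h →
      Integrable (fun x : EuclideanSpace ℝ (Fin n) => Real.exp (-A (h * ‖x‖ / 2))))
    (hover : ∀ K : Set (EuclideanSpace ℝ (Fin n)), IsCompact K →
      ∃ C > (0:ℝ), ∀ x, ∃ hfin : {l : Λ | x - y l ∈ K}.Finite,
        (hfin.toFinset.card : ℝ) ≤ C)
    (hcov : ∃ U : Set (EuclideanSpace ℝ (Fin n)),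
      IsOpen U ∧ Bornology.IsBounded U ∧ (0 : EuclideanSpace ℝ (Fin n)) ∈ U ∧
        ∀ x, ∃ l, x - y l ∈ U) :
    ∀ h > (0:ℝ), ∀ ε > (0:ℝ), ∃ R > (0:ℝ), ∀ μ : Λ,
      Summable (fun l : {l : Λ // R < dist (y l) (y μ)} =>
        Real.exp (-A (h * dist (y l.1) (y μ)))) ∧
      ∑' l : {l : Λ // R < dist (y l) (y μ)},
        Real.exp (-A (h * dist (y l.1) (y μ))) ≤ ε := by
  intro h hh ε hε
  classical
  set g : EuclideanSpace ℝ (Fin n) → ℝ := fun x => Real.exp (-A (h * ‖x‖ / 2)) with hgdef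
  have hgint : Integrable g := hA_int h hh
  obtain ⟨C, hC, hCcard⟩ := hover (Metric.closedBall 0 1) (isCompact_closedBall 0 1)
  set V : ℝ := (volume (Metric.ball (0 : EuclideanSpace ℝ (Fin n)) 1)).toReal with hVdef
  have hVpos : 0 < V := by
    rw [hVdef]
    exact ENNReal.toReal_pos (Metric.measure_ball_pos volume 0 one_pos).ne'
      measure_ball_lt_top.ne
  set c : ℝ := 2 * Real.exp (A h) * C / V with hcdef
  have hc : 0 < c := by
    apply div_pos _ hVpos
    positivity
  -- tail integrals tend to 0
  have htend : Tendsto (fun k : ℕ => ∫ x in (Metric.ball (0 : EuclideanSpace ℝ (Fin n)) k)ᶜ, g x) atTop (𝓝 0) := by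
    have h1 : Tendsto (fun k : ℕ => ∫ x in Metric.ball (0 : EuclideanSpace ℝ (Fin n)) k, g x) atTop
        (𝓝 (∫ x, g x)) := by
      have hmono : Monotone fun k : ℕ => Metric.ball (0 : EuclideanSpace ℝ (Fin n)) (k : ℝ) := by
        intro i j hij
        exact Metric.ball_subset_ball (by exact_mod_cast hij)
      have := tendsto_setIntegral_of_monotone (μ := volume)
        (s := fun k : ℕ => Metric.ball (0 : EuclideanSpace ℝ (Fin n)) (k : ℝ))
        (fun _ => measurableSet_ball) hmono
        (by rw [Metric.iUnion_ball_nat]; exact hgint.integrableOn)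
      rwa [Metric.iUnion_ball_nat, Measure.restrict_univ] at this
    have h2 : ∀ k : ℕ, ∫ x in (Metric.ball (0 : EuclideanSpace ℝ (Fin n)) k)ᶜ, g x
        = (∫ x, g x) - ∫ x in Metric.ball (0 : EuclideanSpace ℝ (Fin n)) k, g x := by
      intro k
      have := integral_add_compl (measurableSet_ball
        (x := (0 : EuclideanSpace ℝ (Fin n))) (ε := (k : ℝ))) hgint
      linarith
    simp only [h2]
    have := h1.const_sub (∫ x, g x)
    simpa using this
  obtain ⟨K, hK⟩ := (htend.eventually (gt_mem_nhds (div_pos hε hc))).exists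
  refine ⟨(K : ℝ) + 1, by positivity, fun μ => ?_⟩
  set R : ℝ := (K : ℝ) + 1 with hRdef
  set f : EuclideanSpace ℝ (Fin n) → ℝ := fun x => g (x - y μ) with hfdef
  have hfint : Integrable f := hgint.comp_sub_right (y μ)
  have hfpos : ∀ x, 0 < f x := fun x => Real.exp_pos _
  set S : Set (EuclideanSpace ℝ (Fin n)) := (Metric.ball (y μ) (K : ℝ))ᶜ with hSdef
  set T : ℝ := ∫ x in (Metric.ball (0 : EuclideanSpace ℝ (Fin n)) K)ᶜ, g x with hTdef
  set D : {l : Λ // R < dist (y l) (y μ)} → ℝ :=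
    fun l => Real.exp (-A (h * dist (y l.1) (y μ))) with hDdef
  have hDnonneg : ∀ l, 0 ≤ D l := fun l => (Real.exp_pos _).le
  -- step A : per-index bound
  have stepA : ∀ l : {l : Λ // R < dist (y l) (y μ)},
      D l * V ≤ 2 * Real.exp (A h) * ∫ x in Metric.ball (y l.1) 1, f x := by
    intro l
    set d : ℝ := dist (y l.1) (y μ) with hddef
    have hd0 : 0 ≤ d := dist_nonneg
    have hpoint : ∀ x ∈ Metric.ball (y l.1) 1,
        Real.exp (-A (h * d)) / (2 * Real.exp (A h)) ≤ f x := by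
      intro x hx
      have hx1 : ‖x - y l.1‖ ≤ 1 := by
        rw [← dist_eq_norm]
        exact le_of_lt (Metric.mem_ball.1 hx)
      have hxn : (0:ℝ) ≤ ‖x - y l.1‖ := norm_nonneg _
      have htri : ‖x - y μ‖ ≤ ‖x - y l.1‖ + d := by
        rw [← dist_eq_norm, hddef]
        exact dist_triangle x (y l.1) (y μ)
      have H1 : A (h * ‖x - y μ‖ / 2) ≤ A (h * ‖x - y l.1‖ / 2 + h * d / 2) := by
        apply hA_mono _ _ (by positivity)
        nlinarith
      have H2 := hA_sub (h * ‖x - y l.1‖ / 2) (h * d / 2) (by positivity) (by positivity)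
      have e1 : 2 * (h * ‖x - y l.1‖ / 2) = h * ‖x - y l.1‖ := by ring
      have e2 : 2 * (h * d / 2) = h * d := by ring
      rw [e1, e2] at H2
      have H3 : Real.exp (A (h * ‖x - y l.1‖)) ≤ Real.exp (A h) := by
        apply Real.exp_le_exp.2
        apply hA_mono _ _ (by positivity)
        nlinarith
      have H : Real.exp (A (h * ‖x - y μ‖ / 2))
          ≤ 2 * Real.exp (A h) * Real.exp (A (h * d)) := by
        calc Real.exp (A (h * ‖x - y μ‖ / 2))
            ≤ Real.exp (A (h * ‖x - y l.1‖ / 2 + h * d / 2)) := Real.exp_le_exp.2 H1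
          _ ≤ 2 * Real.exp (A (h * ‖x - y l.1‖)) * Real.exp (A (h * d)) := H2
          _ ≤ 2 * Real.exp (A h) * Real.exp (A (h * d)) := by
              have := (Real.exp_pos (A (h * d))).le
              nlinarith [Real.exp_pos (A (h * d))]
      show Real.exp (-A (h * d)) / (2 * Real.exp (A h)) ≤ Real.exp (-A (h * ‖x - y μ‖ / 2))
      rw [Real.exp_neg, Real.exp_neg, div_le_iff₀ (by positivity)]
      rw [inv_eq_one_div, inv_eq_one_div, div_mul_eq_mul_div, one_mul,
        div_le_div_iff₀ (Real.exp_pos _) (Real.exp_pos _), one_mul]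
      calc Real.exp (A (h * ‖x - y μ‖ / 2))
          ≤ 2 * Real.exp (A h) * Real.exp (A (h * d)) := H
        _ = 2 * Real.exp (A h) * Real.exp (A (h * d)) := rfl
    have hconst : ∫ _x in Metric.ball (y l.1) 1,
        (Real.exp (-A (h * d)) / (2 * Real.exp (A h)))
        = V * (Real.exp (-A (h * d)) / (2 * Real.exp (A h))) := by
      rw [setIntegral_const, smul_eq_mul]
      congr 1
      rw [hVdef]
      exact congrArg ENNReal.toReal (Measure.addHaar_ball_center volume (y l.1) 1)
    have hmono := setIntegral_mono_on
      (μ := volume) (s := Metric.ball (y l.1) 1)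
      (f := fun _ => Real.exp (-A (h * d)) / (2 * Real.exp (A h))) (g := f)
      (integrableOn_const measure_ball_lt_top.ne)
      hfint.integrableOn measurableSet_ball hpoint
    rw [hconst] at hmono
    have h2 := mul_le_mul_of_nonneg_left hmono
      (by positivity : (0:ℝ) ≤ 2 * Real.exp (A h))
    have heq : 2 * Real.exp (A h) *
        (V * (Real.exp (-A (h * d)) / (2 * Real.exp (A h))))
        = Real.exp (-A (h * d)) * V := by
      field_simp
    rw [heq] at h2
    exact h2
  -- step B : finite sums bound
  have key : ∀ F : Finset {l : Λ // R < dist (y l) (y μ)}, ∑ l ∈ F, D l ≤ ε := by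
    intro F
    -- pointwise indicator bound
    have hpt : ∀ x : EuclideanSpace ℝ (Fin n), ∑ l ∈ F, (Metric.ball (y l.1) 1).indicator f x
        ≤ C * S.indicator f x := by
      intro x
      set P := F.filter (fun l => x ∈ Metric.ball (y l.1) 1) with hPdef
      have hsum : ∑ l ∈ F, (Metric.ball (y l.1) 1).indicator f x = P.card * f x := by
        simp only [Set.indicator_apply]
        rw [hPdef, ← Finset.sum_filter, Finset.sum_const, nsmul_eq_mul]
      rw [hsum]
      obtain ⟨hfin, hcard⟩ := hCcard x
      have hPcard : (P.card : ℝ) ≤ C := by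
        have hsub : ∀ l ∈ P, l.1 ∈ hfin.toFinset := by
          intro l hl
          rw [Set.Finite.mem_toFinset]
          have hx := (Finset.mem_filter.1 hl).2
          simp only [Set.mem_setOf_eq, Metric.mem_closedBall]
          have : dist (x - y l.1) 0 = dist x (y l.1) := by
            rw [dist_zero_right, dist_eq_norm]
          rw [this]
          exact le_of_lt (Metric.mem_ball.1 hx)
        have : P.card ≤ hfin.toFinset.card := by
          apply Finset.card_le_card_of_injOn Subtype.val hsub
          exact Subtype.val_injective.injOn
        calc (P.card : ℝ) ≤ (hfin.toFinset.card : ℝ) := by exact_mod_cast this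
          _ ≤ C := hcard
      rcases P.eq_empty_or_nonempty with hP | hP
      · have hc0 : (P.card : ℝ) = 0 := by simp only [hP, Finset.card_empty, Nat.cast_zero]
        rw [hc0, zero_mul]
        have : 0 ≤ S.indicator f x := Set.indicator_nonneg (fun z _ => (hfpos z).le) x
        positivity
      · obtain ⟨l, hl⟩ := hP
        have hxl := (Finset.mem_filter.1 hl).2
        have hxS : x ∈ S := by
          rw [hSdef]
          simp only [Set.mem_compl_iff, Metric.mem_ball, not_lt]
          have h1 : dist x (y l.1) < 1 := Metric.mem_ball.1 hxl
          have h2 : R < dist (y l.1) (y μ) := l.2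
          have h3 : dist (y l.1) (y μ) ≤ dist (y l.1) x + dist x (y μ) :=
            dist_triangle _ _ _
          rw [dist_comm (y l.1) x] at h3
          have h2' : (K : ℝ) + 1 < dist (y l.1) (y μ) := h2
          linarith
        rw [Set.indicator_of_mem hxS]
        exact mul_le_mul_of_nonneg_right hPcard (hfpos x).le
    -- integrate pointwise bound
    have hindint : ∀ l : {l : Λ // R < dist (y l) (y μ)},
        Integrable ((Metric.ball (y l.1) 1).indicator f) :=
      fun l => hfint.indicator measurableSet_ball
    have hSind : Integrable (fun x => C * S.indicator f x) :=
      (hfint.indicator measurableSet_ball.compl).const_mul C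
    have hintsum : ∑ l ∈ F, ∫ x in Metric.ball (y l.1) 1, f x
        ≤ C * ∫ x in S, f x := by
      have e1 : ∑ l ∈ F, ∫ x in Metric.ball (y l.1) 1, f x
          = ∫ x, ∑ l ∈ F, (Metric.ball (y l.1) 1).indicator f x := by
        rw [integral_finset_sum F (fun l _ => hindint l)]
        exact Finset.sum_congr rfl fun l _ =>
          (integral_indicator measurableSet_ball).symm
      rw [e1]
      calc ∫ x, ∑ l ∈ F, (Metric.ball (y l.1) 1).indicator f x
          ≤ ∫ x, C * S.indicator f x :=
            integral_mono (integrable_finset_sum F (fun l _ => hindint l)) hSind hpt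
        _ = C * ∫ x in S, f x := by
            rw [integral_const_mul, integral_indicator measurableSet_ball.compl]
    -- translation
    have htrans : ∫ x in S, f x = T := by
      have heq : ∀ x : EuclideanSpace ℝ (Fin n), S.indicator f x
          = ((Metric.ball (0 : EuclideanSpace ℝ (Fin n)) K)ᶜ).indicator g (x - y μ) := by
        intro x
        have hmem : x ∈ S ↔ x - y μ ∈ (Metric.ball (0 : EuclideanSpace ℝ (Fin n)) K)ᶜ := by
          simp only [hSdef, Set.mem_compl_iff, Metric.mem_ball, dist_eq_norm, sub_zero]
        by_cases hx : x ∈ S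
        · rw [Set.indicator_of_mem hx, Set.indicator_of_mem (hmem.1 hx)]
        · rw [Set.indicator_of_notMem hx,
            Set.indicator_of_notMem (fun hmem' => hx (hmem.2 hmem'))]
      rw [← integral_indicator measurableSet_ball.compl]
      simp only [← hSdef, heq]
      rw [integral_sub_right_eq_self (((Metric.ball (0 : EuclideanSpace ℝ (Fin n)) K)ᶜ).indicator g) (y μ)]
      rw [hTdef, ← integral_indicator measurableSet_ball.compl]
    -- combine
    have hchain : (∑ l ∈ F, D l) * V ≤ 2 * Real.exp (A h) * (C * T) := by
      calc (∑ l ∈ F, D l) * V = ∑ l ∈ F, D l * V := Finset.sum_mul _ _ _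
        _ ≤ ∑ l ∈ F, 2 * Real.exp (A h) * ∫ x in Metric.ball (y l.1) 1, f x :=
            Finset.sum_le_sum fun l _ => stepA l
        _ = 2 * Real.exp (A h) * ∑ l ∈ F, ∫ x in Metric.ball (y l.1) 1, f x :=
            (Finset.mul_sum _ _ _).symm
        _ ≤ 2 * Real.exp (A h) * (C * T) := by
            apply mul_le_mul_of_nonneg_left _ (by positivity)
            rw [← htrans]
            exact hintsum
    have hcT : ∑ l ∈ F, D l ≤ c * T := by
      rw [hcdef, div_mul_eq_mul_div, le_div_iff₀ hVpos]
      calc (∑ l ∈ F, D l) * V ≤ 2 * Real.exp (A h) * (C * T) := hchain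
        _ = 2 * Real.exp (A h) * C * T := by ring
    calc ∑ l ∈ F, D l ≤ c * T := hcT
      _ ≤ c * (ε / c) := mul_le_mul_of_nonneg_left hK.le hc.le
      _ = ε := mul_div_cancel₀ ε hc.ne'
  have hsummable : Summable D := summable_of_sum_le hDnonneg key
  exact ⟨hsummable, hsummable.tsum_le_of_sum_le key⟩
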